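/- arXiv:1211.4213 — 7 statements merged into one kernel-verified Lean document; each statement's English description precedes it below -/
import Mathlib

section
/- Suppose there exists a vector v ∈ ℂ^N with H_ii v ≠ 0 and H_ji v = 0 for all j ≠ i. If the feasible tuple (Q_1, …, Q_K) is Pareto-optimal, then the column space (range) of Q_i is contained in the sum of the ranges of the matrices H_ji^H for j = 1, …, K, i.e., range(Q_i) ⊆ range(H_1i^H) + range(H_2i^H) + ⋯ + range(H_Ki^H) as subspaces of ℂ^N. (Theorem 1, subspace condition.) -/
open Matrix
open scoped ComplexOrder

section Helpers

set_option linter.unusedSectionVars false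

variable {m n p : Type*} [Fintype m] [Fintype n] [Fintype p]

lemma aux_ext_of_mulVec [DecidableEq n] {A B : Matrix m n ℂ}
    (h : ∀ x, A *ᵥ x = B *ᵥ x) : A = B := by
  ext a b
  simpa [Matrix.mulVec_single] using congrFun (h (Pi.single b 1)) a

lemma aux_mul_vecMulVec (A : Matrix m n ℂ) (v : n → ℂ) (u : p → ℂ) :
    A * vecMulVec v u = vecMulVec (A *ᵥ v) u := by
  ext a b
  simp [Matrix.mul_apply, vecMulVec_apply, mulVec, dotProduct, Finset.sum_mul, mul_assoc]

lemma aux_vecMulVec_mul (v : m → ℂ) (u : n → ℂ) (B : Matrix n p ℂ) :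
    vecMulVec v u * B = vecMulVec v (u ᵥ* B) := by
  ext a b
  simp [Matrix.mul_apply, vecMulVec_apply, vecMul, dotProduct, Finset.mul_sum, mul_assoc]

lemma aux_smul_vecMulVec (c : ℂ) (v : m → ℂ) (u : n → ℂ) :
    c • vecMulVec v u = vecMulVec (c • v) u := by
  ext a b
  simp [vecMulVec_apply, mul_assoc]

lemma aux_vecMulVec_zero (u : n → ℂ) : vecMulVec (0 : m → ℂ) u = 0 := by
  ext a b; simp [vecMulVec_apply]

lemma aux_vecMulVec_mulVec (v : m → ℂ) (u : n → ℂ) (x : n → ℂ) :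
    vecMulVec v u *ᵥ x = (u ⬝ᵥ x) • v := by
  ext a
  simp [mulVec, dotProduct, vecMulVec_apply, Finset.mul_sum, mul_assoc, mul_comm, mul_left_comm]

lemma aux_posSemidef_smul_vecMulVec {ε : ℝ} (hε : 0 ≤ ε) (v : m → ℂ) :
    ((ε : ℂ) • vecMulVec v (star v)).PosSemidef := by
  refine Matrix.posSemidef_iff_dotProduct_mulVec.mpr ⟨?_, ?_⟩
  · ext a b
    simp only [conjTranspose_apply, Matrix.smul_apply, vecMulVec_apply, smul_eq_mul,
      star_mul', Complex.conj_ofReal, Pi.star_apply, star_star, Complex.star_def, Complex.conj_conj]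
    ring
  · intro x
    have h1 : ((ε : ℂ) • vecMulVec v (star v)) *ᵥ x
        = (ε : ℂ) • (((star v) ⬝ᵥ x) • v) := by
      rw [Matrix.smul_mulVec, aux_vecMulVec_mulVec]
    rw [h1]
    have h2 : star x ⬝ᵥ ((ε : ℂ) • (((star v) ⬝ᵥ x) • v))
        = (ε : ℂ) * (((star v) ⬝ᵥ x) * (star x ⬝ᵥ v)) := by
      simp [dotProduct_smul, mul_assoc]
    rw [h2]
    have h3 : star x ⬝ᵥ v = star ((star v) ⬝ᵥ x) := by
      conv_lhs => rw [← star_star v]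
      rw [star_dotProduct_star]
    rw [h3]
    exact mul_nonneg (by exact_mod_cast hε) (mul_star_self_nonneg _)

lemma aux_trace_re_nonneg (B : Matrix m n ℂ) : 0 ≤ (Bᴴ * B).trace.re := by
  have : (Bᴴ * B).trace.re = ∑ a, ∑ k, Complex.normSq (B k a) := by
    rw [Matrix.trace, Complex.re_sum]
    refine Finset.sum_congr rfl fun a _ => ?_
    rw [Matrix.diag_apply, Matrix.mul_apply, Complex.re_sum]
    refine Finset.sum_congr rfl fun k _ => ?_
    simp [Matrix.conjTranspose_apply, Complex.normSq_apply]
  rw [this]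
  exact Finset.sum_nonneg fun a _ => Finset.sum_nonneg fun k _ => Complex.normSq_nonneg _

lemma aux_trace_eq_zero (B : Matrix m n ℂ) (h : (Bᴴ * B).trace.re = 0) : B = 0 := by
  have key : (Bᴴ * B).trace.re = ∑ a, ∑ k, Complex.normSq (B k a) := by
    rw [Matrix.trace, Complex.re_sum]
    refine Finset.sum_congr rfl fun a _ => ?_
    rw [Matrix.diag_apply, Matrix.mul_apply, Complex.re_sum]
    refine Finset.sum_congr rfl fun k _ => ?_
    simp [Matrix.conjTranspose_apply, Complex.normSq_apply]
  rw [key] at h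
  have h2 := (Finset.sum_eq_zero_iff_of_nonneg (fun a _ => Finset.sum_nonneg
    (fun k _ => Complex.normSq_nonneg _))).mp h
  ext k a
  have h3 := (Finset.sum_eq_zero_iff_of_nonneg (fun k _ => Complex.normSq_nonneg _)).mp
    (h2 a (Finset.mem_univ a)) k (Finset.mem_univ k)
  simpa using Complex.normSq_eq_zero.mp h3

lemma aux_pos_re {z : ℂ} (h : 0 < z) : 0 < z.re ∧ z = (z.re : ℂ) := by
  rw [Complex.lt_def] at h
  refine ⟨by simpa using h.1, Complex.ext (by simp) ?_⟩
  simpa using h.2.symm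

lemma aux_det_one_add_inv_mul {n : Type*} [Fintype n] [DecidableEq n]
    {C B : Matrix n n ℂ} (hC : IsUnit C.det) :
    (1 + C⁻¹ * B).det = C.det⁻¹ * (C + B).det := by
  have h1 : (1 + C⁻¹ * B) = C⁻¹ * (C + B) := by
    rw [Matrix.mul_add, Matrix.nonsing_inv_mul _ hC]
  rw [h1, Matrix.det_mul, Matrix.det_nonsing_inv, Ring.inverse_eq_inv]


lemma aux_star_single (N : ℕ) (a : Fin N) :
    star (Pi.single a (1:ℂ) : Fin N → ℂ) = (Pi.single a (1:ℂ) : Fin N → ℂ) := by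
  ext c
  by_cases hc : c = a <;> simp [Pi.single_apply, hc]

lemma aux_conjTranspose_eq {N : ℕ} (Pm : Matrix (Fin N) (Fin N) ℂ)
    (hsa : ∀ x y : Fin N → ℂ, star (Pm *ᵥ x) ⬝ᵥ y = star x ⬝ᵥ (Pm *ᵥ y)) : Pmᴴ = Pm := by
  ext a b
  have h := hsa (Pi.single a (1:ℂ) : Fin N → ℂ) (Pi.single b (1:ℂ) : Fin N → ℂ)
  rw [dotProduct_single, aux_star_single, single_dotProduct, one_mul, mul_one,
    Matrix.mulVec_single, Matrix.mulVec_single] at h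
  simp only [Pi.star_apply, mul_one, MulOpposite.op_one, one_smul, Matrix.col_apply] at h
  rw [Matrix.conjTranspose_apply, ← h]


lemma aux_inner_eq {N : ℕ} (x y : Fin N → ℂ) :
    @inner ℂ (EuclideanSpace ℂ (Fin N)) _ (WithLp.toLp 2 x) (WithLp.toLp 2 y) = star x ⬝ᵥ y := by
  rw [PiLp.inner_apply]
  simp [dotProduct, RCLike.inner_apply, mul_comm]

open scoped MatrixOrder in
lemma aux_sqrt {N : ℕ} {A : Matrix (Fin N) (Fin N) ℂ} (hA : A.PosSemidef) :
    ∃ X : Matrix (Fin N) (Fin N) ℂ, Xᴴ = X ∧ X * X = A := by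
  obtain ⟨X, hX, -, hXA⟩ := CFC.exists_sqrt_of_isSelfAdjoint_of_quasispectrumRestricts
    hA.isHermitian (QuasispectrumRestricts.nnreal_of_nonneg hA.nonneg)
  exact ⟨X, hX, hXA⟩

end Helpers

/-- The achievable rate of user `i` in the `K`-pair Gaussian `(N, M 1, …, M K)` MIMO
interference channel with transmit covariance matrices `Q` and channel matrices `H`,
where interference is treated as noise:
`R_i = log det (I + (I + ∑_{j ≠ i} H i j Q j (H i j)ᴴ)⁻¹ H i i Q i (H i i)ᴴ)`. -/
noncomputable def rate {K N : ℕ} {M : Fin K → ℕ}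
    (H : ∀ i j : Fin K, Matrix (Fin (M i)) (Fin N) ℂ)
    (Q : Fin K → Matrix (Fin N) (Fin N) ℂ) (i : Fin K) : ℝ :=
  Real.log ((1 + (1 + ∑ j ∈ Finset.univ.erase i, H i j * Q j * (H i j)ᴴ)⁻¹ *
    (H i i * Q i * (H i i)ᴴ)).det.re)

/-- Feasibility: each `Q j` is positive semidefinite with `tr (Q j) ≤ P j`. -/
def Feasible {K N : ℕ} (P : Fin K → ℝ) (Q : Fin K → Matrix (Fin N) (Fin N) ℂ) : Prop :=
  ∀ j, (Q j).PosSemidef ∧ (Q j).trace.re ≤ P j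

/-- Pareto optimality: `Q` is feasible and no feasible `Q'` weakly improves every user's
rate while strictly improving at least one user's rate. -/
def ParetoOptimal {K N : ℕ} {M : Fin K → ℕ}
    (H : ∀ i j : Fin K, Matrix (Fin (M i)) (Fin N) ℂ)
    (P : Fin K → ℝ) (Q : Fin K → Matrix (Fin N) (Fin N) ℂ) : Prop :=
  Feasible P Q ∧
    ¬ ∃ Q' : Fin K → Matrix (Fin N) (Fin N) ℂ, Feasible P Q' ∧
      (∀ j, rate H Q j ≤ rate H Q' j) ∧ (∃ j, rate H Q j < rate H Q' j)

/-- **Theorem 1, subspace condition.** If there is a vector `v` with `H i i v ≠ 0` and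
`H j i v = 0` for all `j ≠ i`, and `(Q 1, …, Q K)` is Pareto-optimal, then the column
space (range) of `Q i` is contained in the sum of the ranges of the matrices `(H j i)ᴴ`,
`j = 1, …, K`, as subspaces of `ℂ^N`. -/
theorem stmt0 {K N : ℕ} {M : Fin K → ℕ}
    (H : ∀ i j : Fin K, Matrix (Fin (M i)) (Fin N) ℂ)
    (P : Fin K → ℝ) (hP : ∀ j, 0 < P j)
    (Q : Fin K → Matrix (Fin N) (Fin N) ℂ) (i : Fin K)
    (hv : ∃ v : Fin N → ℂ, H i i *ᵥ v ≠ 0 ∧ ∀ j, j ≠ i → H j i *ᵥ v = 0)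
    (hPareto : ParetoOptimal H P Q) :
    LinearMap.range (Q i).mulVecLin ≤
      ⨆ j : Fin K, LinearMap.range ((H j i)ᴴ).mulVecLin := by
  classical
  obtain ⟨v, hw0, hvj⟩ := hv
  set S : Submodule ℂ (Fin N → ℂ) :=
    ⨆ j : Fin K, LinearMap.range ((H j i)ᴴ).mulVecLin with hSdef
  -- the orthogonal projection onto S, as a matrix
  let S' : Submodule ℂ (EuclideanSpace ℂ (Fin N)) :=
    S.comap (WithLp.linearEquiv 2 ℂ (Fin N → ℂ)).toLinearMap
  let π : (Fin N → ℂ) → (Fin N → ℂ) :=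
    fun x => WithLp.ofLp (S'.starProjection (WithLp.toLp 2 x))
  let pl : (Fin N → ℂ) →ₗ[ℂ] (Fin N → ℂ) :=
    (WithLp.linearEquiv 2 ℂ (Fin N → ℂ)).toLinearMap ∘ₗ S'.starProjection.toLinearMap ∘ₗ
      (WithLp.linearEquiv 2 ℂ (Fin N → ℂ)).symm.toLinearMap
  let Pm : Matrix (Fin N) (Fin N) ℂ := LinearMap.toMatrix' pl
  have hPmv : ∀ x : Fin N → ℂ, Pm *ᵥ x = π x := by
    intro x
    have : Matrix.toLin' Pm x = pl x := by rw [Matrix.toLin'_toMatrix']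
    exact (Matrix.toLin'_apply Pm x).symm.trans this
  have hπS : ∀ x : Fin N → ℂ, π x ∈ S := fun x => S'.starProjection_apply_mem (WithLp.toLp 2 x)
  have hπid : ∀ x ∈ S, π x = x := by
    intro x hx
    exact congrArg WithLp.ofLp (Submodule.starProjection_eq_self_iff (K := S') (v := WithLp.toLp 2 x) |>.mpr hx)
  have hinner : ∀ x y : Fin N → ℂ,
      @inner ℂ (EuclideanSpace ℂ (Fin N)) _ (WithLp.toLp 2 x) (WithLp.toLp 2 y) = star x ⬝ᵥ y :=
      fun x y => aux_inner_eq x y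
  have hsa : ∀ x y : Fin N → ℂ, star (π x) ⬝ᵥ y = star x ⬝ᵥ (π y) := by
    intro x y
    rw [← hinner, ← hinner]
    exact Submodule.inner_starProjection_left_eq_right S' (WithLp.toLp 2 x) (WithLp.toLp 2 y)
  have horth : ∀ x : Fin N → ℂ, ∀ s ∈ S, star s ⬝ᵥ (x - π x) = 0 := by
    intro x s hs
    rw [← hinner]
    exact (Submodule.sub_starProjection_mem_orthogonal (K := S') (WithLp.toLp 2 x)) (WithLp.toLp 2 s) hs
  -- basic matrix facts about Pm
  have hPm2 : Pm * Pm = Pm := by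
    apply aux_ext_of_mulVec
    intro x
    rw [← Matrix.mulVec_mulVec, hPmv, hPmv]
    exact hπid _ (hπS x)
  have hPmH : Pmᴴ = Pm := by
    apply aux_conjTranspose_eq
    intro x y
    rw [hPmv, hPmv]
    exact hsa x y
  have hHP : ∀ j : Fin K, H j i * Pm = H j i := by
    intro j
    apply aux_ext_of_mulVec
    intro x
    rw [← Matrix.mulVec_mulVec, hPmv]
    have hker : H j i *ᵥ (x - π x) = 0 := by
      have hz : ∀ z : Fin (M j) → ℂ, z ⬝ᵥ (H j i *ᵥ (x - π x)) = 0 := by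
        intro z
        have hmem : (H j i)ᴴ *ᵥ (star z) ∈ S :=
          (le_iSup (fun j => LinearMap.range ((H j i)ᴴ).mulVecLin) j) ⟨star z, rfl⟩
        have h0 := horth x _ hmem
        rw [Matrix.star_mulVec, Matrix.conjTranspose_conjTranspose, star_star] at h0
        rwa [Matrix.dotProduct_mulVec]
      have := dotProduct_eq_zero (H j i *ᵥ (x - π x))
        (fun w => by rw [dotProduct_comm]; exact hz w)
      exact this
    rw [Matrix.mulVec_sub] at hker
    exact (sub_eq_zero.mp hker).symm
  have hPH : ∀ j : Fin K, Pm * (H j i)ᴴ = (H j i)ᴴ := by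
    intro j
    calc Pm * (H j i)ᴴ = Pmᴴ * (H j i)ᴴ := by rw [hPmH]
    _ = (H j i * Pm)ᴴ := by rw [← Matrix.conjTranspose_mul]
    _ = (H j i)ᴴ := by rw [hHP j]
  obtain ⟨hQi, htri⟩ := hPareto.1 i
  set Qi := Q i with hQidef
  obtain ⟨Sq, hSqH, hSqSq⟩ := aux_sqrt hQi
  set R : Matrix (Fin N) (Fin N) ℂ := 1 - Pm with hRdef
  have hRH : Rᴴ = R := by
    rw [hRdef, Matrix.conjTranspose_sub, Matrix.conjTranspose_one, hPmH]
  have hTfact : (Sq * R)ᴴ * (Sq * R) = R * Qi * R := by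
    rw [Matrix.conjTranspose_mul, hRH, hSqH]
    rw [Matrix.mul_assoc R Sq (Sq * R), ← Matrix.mul_assoc Sq Sq R,
      hSqSq, ← Matrix.mul_assoc]
  have hδtr : (R * Qi * R).trace = Qi.trace - (Pm * Qi * Pm).trace := by
    have hexp : R * Qi * R = Qi - Pm * Qi - Qi * Pm + Pm * Qi * Pm := by
      rw [hRdef]; noncomm_ring
    have h1 : (Pm * Qi * Pm).trace = (Qi * Pm).trace := by
      rw [Matrix.mul_assoc, Matrix.trace_mul_comm, Matrix.mul_assoc, hPm2]
    have h2 : (Pm * Qi).trace = (Qi * Pm).trace := Matrix.trace_mul_comm _ _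
    rw [hexp, Matrix.trace_add, Matrix.trace_sub, Matrix.trace_sub, h1, h2]
    ring
  set δ : ℝ := (R * Qi * R).trace.re with hδdef
  have hδnn : 0 ≤ δ := by
    rw [hδdef, ← hTfact]
    exact aux_trace_re_nonneg _
  by_cases hδ0 : δ = 0
  · -- degenerate case: the range is already inside S
    have hCm0 : Sq * R = 0 := by
      apply aux_trace_eq_zero
      rw [hTfact]
      exact hδ0
    have hQR : Qi * R = 0 := by
      have h : Qi * R = Sq * (Sq * R) := by
        rw [← Matrix.mul_assoc, hSqSq]
      rw [h, hCm0, Matrix.mul_zero]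
    have hQP : Qi = Qi * Pm := by
      have h : Qi * (1 - Pm) = 0 := hQR
      rw [Matrix.mul_sub, Matrix.mul_one] at h
      exact sub_eq_zero.mp h
    have hPQ : Qi = Pm * Qi := by
      have h := congrArg Matrix.conjTranspose hQP
      rwa [Matrix.conjTranspose_mul, hPmH, hQi.1] at h
    intro y hy
    obtain ⟨x, rfl⟩ := hy
    have hx : Qi *ᵥ x = π (Qi *ᵥ x) := by
      conv_lhs => rw [hPQ]
      rw [← Matrix.mulVec_mulVec, hPmv]
    show Qi *ᵥ x ∈ S
    rw [hx]
    exact hπS _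
  · have hδpos : 0 < δ := lt_of_le_of_ne hδnn (Ne.symm hδ0)
    exfalso
    have hv0 : v ≠ 0 := by
      intro hv0'
      apply hw0
      rw [hv0', Matrix.mulVec_zero]
    set w : Fin (M i) → ℂ := H i i *ᵥ v with hwdef
    set tv : ℝ := (vecMulVec v (star v)).trace.re with htvdef
    have htv : tv = ∑ a, Complex.normSq (v a) := by
      rw [htvdef, Matrix.trace, Complex.re_sum]
      refine Finset.sum_congr rfl fun a _ => ?_
      simp [Matrix.diag_apply, Matrix.vecMulVec_apply, Pi.star_apply, Complex.mul_conj]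
    have htvpos : 0 < tv := by
      rw [htv]
      have hex : ∃ a, v a ≠ 0 := by
        by_contra hcon
        push_neg at hcon
        exact hv0 (funext fun a => hcon a)
      obtain ⟨a, ha⟩ := hex
      exact Finset.sum_pos' (fun b _ => Complex.normSq_nonneg _)
        ⟨a, Finset.mem_univ a, Complex.normSq_pos.mpr ha⟩
    set ε : ℝ := δ / tv with hεdef
    have hεpos : 0 < ε := div_pos hδpos htvpos
    set Qi' : Matrix (Fin N) (Fin N) ℂ :=
      Pm * Qi * Pm + (ε : ℂ) • vecMulVec v (star v) with hQi'def
    set Q' := Function.update Q i Qi' with hQ'def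
    have hQ'i : Q' i = Qi' := by rw [hQ'def]; simp
    have hQ'ne : ∀ k, k ≠ i → Q' k = Q k := by
      intro k hk
      rw [hQ'def]
      exact Function.update_of_ne hk Qi' Q
    have htrQi' : Qi'.trace.re = Qi.trace.re := by
      have hδre : δ = Qi.trace.re - (Pm * Qi * Pm).trace.re := by
        rw [hδdef, hδtr, Complex.sub_re]
      have hεtv : ε * tv = δ := by
        rw [hεdef]
        field_simp
      rw [hQi'def, Matrix.trace_add, Matrix.trace_smul, Complex.add_re, smul_eq_mul,
        Complex.re_ofReal_mul, ← htvdef, hεtv, hδre]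
      ring
    have hQi'psd : Qi'.PosSemidef := by
      rw [hQi'def]
      have h1 : (Pm * Qi * Pm).PosSemidef := by
        have h2 := hQi.mul_mul_conjTranspose_same Pm
        rwa [hPmH] at h2
      exact h1.add (aux_posSemidef_smul_vecMulVec hεpos.le v)
    have hfeas : Feasible P Q' := by
      intro k
      by_cases hk : k = i
      · subst hk
        rw [hQ'i, htrQi']
        exact ⟨hQi'psd, htri⟩
      · rw [hQ'ne k hk]
        exact hPareto.1 k
    have hint : ∀ j : Fin K, H j i * Qi' * (H j i)ᴴ
        = H j i * Qi * (H j i)ᴴ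
          + (ε:ℂ) • vecMulVec (H j i *ᵥ v) (star v ᵥ* (H j i)ᴴ) := by
      intro j
      rw [hQi'def, Matrix.mul_add, Matrix.add_mul]
      congr 1
      · simp only [← Matrix.mul_assoc]
        rw [hHP j, Matrix.mul_assoc (H j i * Qi) Pm (H j i)ᴴ, hPH j]
      · rw [Matrix.mul_smul, Matrix.smul_mul, aux_mul_vecMulVec, aux_vecMulVec_mul]
    have hint_ne : ∀ j, j ≠ i → H j i * Qi' * (H j i)ᴴ = H j i * Qi * (H j i)ᴴ := by
      intro j hj
      rw [hint j, hvj j hj, aux_vecMulVec_zero, smul_zero, add_zero]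
    have hint_i : H i i * Qi' * (H i i)ᴴ
        = H i i * Qi * (H i i)ᴴ + (ε:ℂ) • vecMulVec w (star w) := by
      rw [hint i, ← Matrix.star_mulVec, ← hwdef]
    have hrate_ne : ∀ j, j ≠ i → rate H Q' j = rate H Q j := by
      intro j hj
      unfold rate
      have hsum : ∑ k ∈ Finset.univ.erase j, H j k * Q' k * (H j k)ᴴ
          = ∑ k ∈ Finset.univ.erase j, H j k * Q k * (H j k)ᴴ := by
        refine Finset.sum_congr rfl fun k _ => ?_
        by_cases hki : k = i
        · subst hki
          rw [hQ'i, hint_ne j hj, hQidef]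
        · rw [hQ'ne k hki]
      rw [hsum, hQ'ne j hj]
    set C : Matrix (Fin (M i)) (Fin (M i)) ℂ :=
      1 + ∑ k ∈ Finset.univ.erase i, H i k * Q k * (H i k)ᴴ with hCdef
    have hsumC : ∑ k ∈ Finset.univ.erase i, H i k * Q' k * (H i k)ᴴ
        = ∑ k ∈ Finset.univ.erase i, H i k * Q k * (H i k)ᴴ := by
      refine Finset.sum_congr rfl fun k hk => ?_
      rw [hQ'ne k (Finset.ne_of_mem_erase hk)]
    have hsumPSD : (∑ k ∈ Finset.univ.erase i, H i k * Q k * (H i k)ᴴ).PosSemidef := by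
      refine Finset.sum_induction _ _ (fun a b ha hb => ha.add hb) Matrix.PosSemidef.zero ?_
      intro k _
      exact ((hPareto.1 k).1).mul_mul_conjTranspose_same (H i k)
    have hC : C.PosDef := by
      rw [hCdef]
      exact Matrix.PosDef.one.add_posSemidef hsumPSD
    set B : Matrix (Fin (M i)) (Fin (M i)) ℂ := H i i * Qi * (H i i)ᴴ with hBdef
    have hBpsd : B.PosSemidef := by
      rw [hBdef]
      exact hQi.mul_mul_conjTranspose_same _
    set Mm := C + B with hMmdef
    have hMm : Mm.PosDef := by
      rw [hMmdef]
      exact hC.add_posSemidef hBpsd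
    have hMmInv : Mm⁻¹.PosDef := hMm.inv
    set t : ℂ := (star w ᵥ* Mm⁻¹) ⬝ᵥ w with htdef
    have ht : 0 < t := by
      have h := hMmInv.dotProduct_mulVec_pos hw0
      rwa [Matrix.dotProduct_mulVec] at h
    obtain ⟨htre, hteq⟩ := aux_pos_re ht
    obtain ⟨hare, haeq⟩ := aux_pos_re hC.det_pos
    obtain ⟨hbre, hbeq⟩ := aux_pos_re hMm.det_pos
    have hdet1 : (1 + C⁻¹ * B).det.re = (C.det.re)⁻¹ * Mm.det.re := by
      rw [aux_det_one_add_inv_mul (isUnit_iff_ne_zero.mpr hC.det_pos.ne'), ← hMmdef]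
      have hcast : C.det⁻¹ * Mm.det = ((C.det.re : ℂ))⁻¹ * ((Mm.det.re : ℂ)) := by
        rw [← haeq, ← hbeq]
      rw [hcast]
      norm_cast
    have hrank1 : (Mm + (ε:ℂ) • vecMulVec w (star w)).det = Mm.det * (1 + (ε:ℂ) * t) := by
      rw [aux_smul_vecMulVec, Matrix.vecMulVec_eq Unit,
        Matrix.det_add_replicateCol_mul_replicateRow (isUnit_iff_ne_zero.mpr hMm.det_pos.ne')]
      congr 1
      rw [Matrix.det_unique, Matrix.add_apply, Matrix.one_apply_eq]
      congr 1
      rw [← Matrix.replicateRow_vecMul, Matrix.replicateRow_mul_replicateCol_apply, dotProduct_smul,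
        smul_eq_mul, ← htdef]
    have hdet2 : (1 + C⁻¹ * (B + (ε:ℂ) • vecMulVec w (star w))).det.re
        = (C.det.re)⁻¹ * (Mm.det.re * (1 + ε * t.re)) := by
      rw [aux_det_one_add_inv_mul (isUnit_iff_ne_zero.mpr hC.det_pos.ne'),
        ← add_assoc, ← hMmdef, hrank1]
      have hcast : C.det⁻¹ * (Mm.det * (1 + (ε:ℂ) * t))
          = ((C.det.re : ℂ))⁻¹ * ((Mm.det.re : ℂ) * (1 + (ε:ℂ) * (t.re : ℂ))) := by
        rw [← haeq, ← hbeq, ← hteq]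
      rw [hcast]
      norm_cast
    have hri : rate H Q i < rate H Q' i := by
      have key1 : rate H Q i = Real.log ((C.det.re)⁻¹ * Mm.det.re) := by
        unfold rate
        rw [← hQidef, ← hBdef, ← hCdef, hdet1]
      have key2 : rate H Q' i
          = Real.log ((C.det.re)⁻¹ * (Mm.det.re * (1 + ε * t.re))) := by
        unfold rate
        rw [hsumC, hQ'i, hint_i, ← hCdef, hdet2]
      rw [key1, key2]
      apply Real.log_lt_log
      · exact mul_pos (inv_pos.mpr hare) hbre
      · have hb' : Mm.det.re < Mm.det.re * (1 + ε * t.re) := by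
          nlinarith [mul_pos hεpos htre]
        exact mul_lt_mul_of_pos_left hb' (inv_pos.mpr hare)
    exact hPareto.2 ⟨Q', hfeas, fun j => by
      by_cases hj : j = i
      · subst hj; exact le_of_lt hri
      · rw [hrate_ne j hj], ⟨i, hri⟩⟩
end

section
/- Suppose there exists a vector v ∈ ℂ^N with H_ii v ≠ 0 and H_ji v = 0 for all j ≠ i. If the feasible tuple (Q_1, …, Q_K) is Pareto-optimal, then transmitter i uses full power: tr(Q_i) = P_i. (Theorem 1, full-power condition; in the paper the existence of such v holds almost surely when N ≥ Σ_i M_i.) -/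
open Matrix
open scoped ComplexOrder

lemma aux_det_real {n : ℕ} {A : Matrix (Fin n) (Fin n) ℂ} (hA : A.PosDef) :
    ∃ a : ℝ, 0 < a ∧ A.det = (a : ℂ) := by
  have h := hA.det_pos
  rw [Complex.lt_def] at h
  exact ⟨A.det.re, by simpa using h.1, by apply Complex.ext <;> simp [← h.2]⟩

lemma aux_trace_real {n : ℕ} {A : Matrix (Fin n) (Fin n) ℂ} (hA : A.PosSemidef) :
    A.trace = (A.trace.re : ℂ) := by
  have h : star A.trace = A.trace := by rw [← Matrix.trace_conjTranspose, hA.isHermitian.eq]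
  exact (Complex.conj_eq_iff_re.mp h).symm

lemma aux_sandwich {m n : ℕ} (B : Matrix (Fin m) (Fin n) ℂ) (u : Fin n → ℂ) :
    B * (replicateCol Unit u * (replicateCol Unit u)ᴴ) * Bᴴ = replicateCol Unit (B *ᵥ u) * (replicateCol Unit (B *ᵥ u))ᴴ := by
  rw [replicateCol_mulVec, conjTranspose_mul, ← Matrix.mul_assoc, ← Matrix.mul_assoc]

lemma aux_det_lemma {m : ℕ} {B : Matrix (Fin m) (Fin m) ℂ} (hB : B.PosDef)
    {w : Fin m → ℂ} (hw : w ≠ 0) :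
    ∃ t : ℝ, 0 < t ∧ (B + replicateCol Unit w * (replicateCol Unit w)ᴴ).det = B.det * (1 + (t:ℂ)) := by
  have hinv := hB.inv
  have ht := hinv.dotProduct_mulVec_pos hw
  rw [Complex.lt_def] at ht
  have htre : star w ⬝ᵥ B⁻¹ *ᵥ w = ((star w ⬝ᵥ B⁻¹ *ᵥ w).re : ℂ) := by
    apply Complex.ext <;> simp [← ht.2]
  refine ⟨(star w ⬝ᵥ B⁻¹ *ᵥ w).re, by simpa using ht.1, ?_⟩
  rw [conjTranspose_replicateCol, det_add_replicateCol_mul_replicateRow hB.det_pos.ne'.isUnit, ← htre]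
  congr 1
  rw [det_unique, Matrix.mul_assoc, ← replicateCol_mulVec]
  simp [dotProduct_mulVec]

lemma aux_psd_sum {K m N : ℕ} (s : Finset (Fin K)) (G : Fin K → Matrix (Fin m) (Fin N) ℂ)
    (Q : Fin K → Matrix (Fin N) (Fin N) ℂ) (hQ : ∀ j, (Q j).PosSemidef) :
    (∑ j ∈ s, G j * Q j * (G j)ᴴ).PosSemidef := by
  refine Finset.sum_induction _ _ (fun a b ha hb => ha.add hb) Matrix.PosSemidef.zero ?_
  exact fun j _ => (hQ j).mul_mul_conjTranspose_same (G j)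

/-- **Theorem 1, full-power condition.** If there is a vector `v` with `H i i v ≠ 0` and
`H j i v = 0` for all `j ≠ i`, and `(Q 1, …, Q K)` is Pareto-optimal, then transmitter `i`
uses full power: `tr (Q i) = P i`. -/
theorem stmt1 {K N : ℕ} {M : Fin K → ℕ}
    (H : ∀ i j : Fin K, Matrix (Fin (M i)) (Fin N) ℂ)
    (P : Fin K → ℝ) (hP : ∀ j, 0 < P j)
    (Q : Fin K → Matrix (Fin N) (Fin N) ℂ) (i : Fin K)
    (hv : ∃ v : Fin N → ℂ, H i i *ᵥ v ≠ 0 ∧ ∀ j, j ≠ i → H j i *ᵥ v = 0)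
    (hPareto : ParetoOptimal H P Q) :
    (Q i).trace = (P i : ℂ) := by
  obtain ⟨v, hwv, hzero⟩ := hv
  obtain ⟨hfeas, hnot⟩ := hPareto
  have htr := aux_trace_real (hfeas i).1
  suffices h : (Q i).trace.re = P i by rw [htr, h]
  by_contra hne
  have hlt : (Q i).trace.re < P i := lt_of_le_of_ne (hfeas i).2 hne
  have hv0 : v ≠ 0 := by rintro rfl; simp at hwv
  set nv : ℝ := ∑ a, Complex.normSq (v a) with hnv_def
  have hnv : 0 < nv := by
    obtain ⟨a, ha⟩ := Function.ne_iff.mp hv0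
    exact Finset.sum_pos' (fun b _ => Complex.normSq_nonneg _)
      ⟨a, Finset.mem_univ a, Complex.normSq_pos.mpr ha⟩
  set ε : ℝ := (P i - (Q i).trace.re) / nv with hε_def
  have hε : 0 < ε := div_pos (by linarith) hnv
  set c : ℝ := Real.sqrt ε with hc_def
  have hc : 0 < c := Real.sqrt_pos.mpr hε
  set u : Fin N → ℂ := (c : ℂ) • v with hu_def
  set D : Matrix (Fin N) (Fin N) ℂ := replicateCol Unit u * (replicateCol Unit u)ᴴ with hD_def
  have hDpsd : D.PosSemidef := posSemidef_self_mul_conjTranspose _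
  have hεnv : ε * nv = P i - (Q i).trace.re := div_mul_cancel₀ _ hnv.ne'
  have hterm : ∀ a, u a * star (u a) = ((ε : ℂ)) * Complex.normSq (v a) := by
    intro a
    simp only [hu_def, Pi.smul_apply, smul_eq_mul, star_mul', Complex.star_def,
      Complex.conj_ofReal]
    rw [mul_mul_mul_comm, Complex.mul_conj, ← Complex.ofReal_mul,
      Real.mul_self_sqrt hε.le]
  have hDtr : D.trace = ((P i - (Q i).trace.re : ℝ) : ℂ) := by
    rw [hD_def, conjTranspose_replicateCol, trace_replicateCol_mul_replicateRow, ← hεnv]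
    simp only [dotProduct, Pi.star_apply, hterm, ← Finset.mul_sum]
    push_cast [hnv_def]
    ring
  set Q' := Function.update Q i (Q i + D) with hQ'_def
  have hQ'i : Q' i = Q i + D := Function.update_self i _ Q
  have hQ'ne : ∀ j, j ≠ i → Q' j = Q j := fun j hj => Function.update_of_ne hj _ Q
  -- kernel property
  have hmu : ∀ j, j ≠ i → H j i *ᵥ u = 0 := by
    intro j hj
    rw [hu_def, Matrix.mulVec_smul, hzero j hj, smul_zero]
  have hker : ∀ j, j ≠ i → H j i * Q' i * (H j i)ᴴ = H j i * Q i * (H j i)ᴴ := by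
    intro j hj
    rw [hQ'i, Matrix.mul_add, Matrix.add_mul, aux_sandwich, hmu j hj]
    simp
  -- feasibility of Q'
  have hfeas' : Feasible P Q' := by
    intro j
    by_cases hj : j = i
    · subst hj
      rw [hQ'i]
      refine ⟨(hfeas j).1.add hDpsd, ?_⟩
      rw [Matrix.trace_add, hDtr]
      simp
    · rw [hQ'ne j hj]; exact hfeas j
  -- rates of other users are unchanged
  have hrate_eq : ∀ j, j ≠ i → rate H Q' j = rate H Q j := by
    intro j hj
    have hsum : (∑ l ∈ Finset.univ.erase j, H j l * Q' l * (H j l)ᴴ)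
        = ∑ l ∈ Finset.univ.erase j, H j l * Q l * (H j l)ᴴ := by
      refine Finset.sum_congr rfl fun l hl => ?_
      by_cases hli : l = i
      · subst hli; rw [hker j hj]
      · rw [hQ'ne l hli]
    unfold rate
    rw [hsum, hQ'ne j hj]
  -- rate of user i strictly increases
  set A : Matrix (Fin (M i)) (Fin (M i)) ℂ :=
    1 + ∑ j ∈ Finset.univ.erase i, H i j * Q j * (H i j)ᴴ with hA_def
  have hApd : A.PosDef :=
    Matrix.PosDef.one.add_posSemidef (aux_psd_sum _ _ _ fun j => (hfeas j).1)
  set S : Matrix (Fin (M i)) (Fin (M i)) ℂ := H i i * Q i * (H i i)ᴴ with hS_def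
  have hSpsd : S.PosSemidef := (hfeas i).1.mul_mul_conjTranspose_same (H i i)
  have hBpd : (A + S).PosDef := hApd.add_posSemidef hSpsd
  set w' : Fin (M i) → ℂ := H i i *ᵥ u with hw'_def
  have hw' : w' ≠ 0 := by
    rw [hw'_def, hu_def, Matrix.mulVec_smul]
    exact smul_ne_zero (by exact_mod_cast hc.ne') hwv
  set W : Matrix (Fin (M i)) (Fin (M i)) ℂ := replicateCol Unit w' * (replicateCol Unit w')ᴴ with hW_def
  have hsig : H i i * Q' i * (H i i)ᴴ = S + W := by
    rw [hQ'i, Matrix.mul_add, Matrix.add_mul, hS_def, hW_def, aux_sandwich, hw'_def]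
  obtain ⟨a, ha, hadet⟩ := aux_det_real hApd
  obtain ⟨b, hb, hbdet⟩ := aux_det_real hBpd
  obtain ⟨t, htpos, htdet⟩ := aux_det_lemma hBpd hw'
  have hAinv : A⁻¹.det = ((a⁻¹ : ℝ) : ℂ) := by
    rw [Matrix.det_nonsing_inv, Ring.inverse_eq_inv, hadet, Complex.ofReal_inv]
  have hfact : ∀ X : Matrix (Fin (M i)) (Fin (M i)) ℂ, 1 + A⁻¹ * X = A⁻¹ * (A + X) := by
    intro X
    rw [Matrix.mul_add, Matrix.nonsing_inv_mul A hApd.det_pos.ne'.isUnit]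
  have hrate_lt : rate H Q i < rate H Q' i := by
    have hsum : (∑ l ∈ Finset.univ.erase i, H i l * Q' l * (H i l)ᴴ)
        = ∑ l ∈ Finset.univ.erase i, H i l * Q l * (H i l)ᴴ :=
      Finset.sum_congr rfl fun l hl => by rw [hQ'ne l (Finset.ne_of_mem_erase hl)]
    unfold rate
    rw [hsum, hsig, ← hA_def, ← hS_def, hfact S, hfact (S + W), ← add_assoc,
      Matrix.det_mul, Matrix.det_mul, hAinv, hbdet, hW_def, htdet, hbdet]
    have hL : ((a⁻¹ : ℝ) : ℂ) * (b : ℂ) = ((a⁻¹ * b : ℝ) : ℂ) := by push_cast; ring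
    have hR : ((a⁻¹ : ℝ) : ℂ) * ((b : ℂ) * (1 + (t : ℂ))) =
        ((a⁻¹ * (b * (1 + t)) : ℝ) : ℂ) := by push_cast; ring
    rw [hL, hR, Complex.ofReal_re, Complex.ofReal_re]
    apply Real.log_lt_log (by positivity)
    have h1 : (0:ℝ) < a⁻¹ * b := by positivity
    nlinarith
  exact hnot ⟨Q', hfeas', fun j => by
    by_cases hj : j = i
    · subst hj; exact hrate_lt.le
    · rw [hrate_eq j hj], ⟨i, hrate_lt⟩⟩
end

section
/- Let V_1, V_2 ∈ ℂ^{N×M} each have orthonormal columns (V_1^H V_1 = I_M and V_2^H V_2 = I_M), and suppose the M×M matrix V_2^H V_1 is invertible. Then the span of the columns of the N×2M matrix [V_1, (I_N − V_2 V_2^H) V_1] equals the span of the columns of [V_1, V_2]. (Key subspace identity in Corollary 1: C([V_11^∥, Π_{V_21^⊥} V_11^∥]) = C([V_11^∥, V_21^∥]).) -/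
open Matrix

lemma range_fromColumns {N M₁ M₂ : ℕ} (A : Matrix (Fin N) (Fin M₁) ℂ)
    (B : Matrix (Fin N) (Fin M₂) ℂ) :
    LinearMap.range (Matrix.fromCols A B).mulVecLin =
      LinearMap.range A.mulVecLin ⊔ LinearMap.range B.mulVecLin := by
  apply le_antisymm
  · rintro x ⟨v, rfl⟩
    have : (fromCols A B).mulVecLin v = A *ᵥ (v ∘ Sum.inl) + B *ᵥ (v ∘ Sum.inr) := by
      have hv : v = Sum.elim (v ∘ Sum.inl) (v ∘ Sum.inr) := by
        ext (i | i) <;> rfl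
      rw [mulVecLin_apply]
      conv_lhs => rw [hv]
      exact fromCols_mulVec_sumElim A B _ _
    rw [this]
    exact Submodule.add_mem_sup ⟨_, rfl⟩ ⟨_, rfl⟩
  · rw [sup_le_iff]
    constructor
    · rintro x ⟨v, rfl⟩
      refine ⟨Sum.elim v 0, ?_⟩
      simp [mulVecLin_apply, fromCols_mulVec_sumElim]
    · rintro x ⟨v, rfl⟩
      refine ⟨Sum.elim 0 v, ?_⟩
      simp [mulVecLin_apply, fromCols_mulVec_sumElim]

/-- **Key subspace identity in Corollary 1.** If `V₁, V₂ ∈ ℂ^{N×M}` have orthonormal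
columns and `V₂ᴴ V₁` is invertible, then the column span of `[V₁, (I − V₂ V₂ᴴ) V₁]`
equals the column span of `[V₁, V₂]`. -/
theorem stmt9 {N M : ℕ} (V1 V2 : Matrix (Fin N) (Fin M) ℂ)
    (h1 : V1ᴴ * V1 = 1) (h2 : V2ᴴ * V2 = 1) (hinv : IsUnit (V2ᴴ * V1)) :
    LinearMap.range (Matrix.fromCols V1 ((1 - V2 * V2ᴴ) * V1)).mulVecLin =
      LinearMap.range (Matrix.fromCols V1 V2).mulVecLin := by
  rw [range_fromColumns, range_fromColumns]
  set B := V2ᴴ * V1 with hB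
  have hW : (1 - V2 * V2ᴴ) * V1 = V1 - V2 * B := by
    rw [Matrix.sub_mul, Matrix.one_mul, Matrix.mul_assoc]
  have hVB : LinearMap.range (V2 * B).mulVecLin = LinearMap.range V2.mulVecLin := by
    rw [mulVecLin_mul]
    exact LinearMap.range_comp_of_range_eq_top _
      (LinearMap.range_eq_top.mpr (by
        intro y
        obtain ⟨Bi, hBi⟩ := hinv.exists_right_inv
        exact ⟨Bi *ᵥ y, by rw [mulVecLin_apply, mulVec_mulVec, hBi, one_mulVec]⟩))
  have key : LinearMap.range V1.mulVecLin ⊔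
      LinearMap.range ((1 - V2 * V2ᴴ) * V1).mulVecLin =
      LinearMap.range V1.mulVecLin ⊔ LinearMap.range (V2 * B).mulVecLin := by
    apply le_antisymm <;> rw [sup_le_iff] <;>
      refine ⟨le_sup_left, ?_⟩ <;> rintro x ⟨v, rfl⟩
    · rw [hW, mulVecLin_apply, sub_mulVec]
      exact Submodule.sub_mem _ (Submodule.mem_sup_left ⟨v, rfl⟩)
        (Submodule.mem_sup_right ⟨v, rfl⟩)
    · have : (V2 * B) *ᵥ v = V1 *ᵥ v - ((1 - V2 * V2ᴴ) * V1) *ᵥ v := by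
        rw [hW, sub_mulVec]; abel
      rw [mulVecLin_apply, this]
      exact Submodule.sub_mem _ (Submodule.mem_sup_left ⟨v, rfl⟩)
        (Submodule.mem_sup_right ⟨v, rfl⟩)
  rw [key, hVB]
end

section
/- In the two-user symmetric case (K = 2, M_1 = M_2 = M), suppose: H_11 and H_21 ∈ ℂ^{M×N} both have full row rank M; there exists v ∈ ℂ^N with H_11 v ≠ 0 and H_21 v = 0; and the M×M matrix H_21 H_11^H is invertible. Let P denote the orthogonal projection of ℂ^N onto range(H_21^H). If the feasible pair (Q_1, Q_2) is Pareto-optimal, then range(Q_1) ⊆ range([H_11^H, (I − P) H_11^H]), i.e., the column space of Q_1 is contained in the sum of range(H_11^H) and the image of range(H_11^H) under the projection I − P. (Corollary 1.) -/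
open Matrix
open scoped ComplexOrder

private lemma ext_mulVec {m n : ℕ} {A B : Matrix (Fin m) (Fin n) ℂ}
    (h : ∀ x, A *ᵥ x = B *ᵥ x) : A = B := by
  ext i j
  have := congrFun (h (Pi.single j 1)) i
  simpa [Matrix.mulVec_single] using this

private lemma trace_re_eq_sum {m n : ℕ} (B : Matrix (Fin m) (Fin n) ℂ) :
    (Bᴴ * B).trace.re = ∑ j, ∑ i, Complex.normSq (B i j) := by
  simp only [Matrix.trace, Matrix.diag, Matrix.mul_apply, Matrix.conjTranspose_apply,
    Complex.re_sum]
  refine Finset.sum_congr rfl fun j _ => Finset.sum_congr rfl fun i _ => ?_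
  rw [mul_comm, Complex.star_def, Complex.mul_conj]
  simp

private lemma trace_re_nonneg {m n : ℕ} (B : Matrix (Fin m) (Fin n) ℂ) :
    0 ≤ (Bᴴ * B).trace.re := by
  rw [trace_re_eq_sum]
  exact Finset.sum_nonneg fun j _ => Finset.sum_nonneg fun i _ => Complex.normSq_nonneg _

private lemma eq_zero_of_trace_re {m n : ℕ} {B : Matrix (Fin m) (Fin n) ℂ}
    (h : (Bᴴ * B).trace.re = 0) : B = 0 := by
  rw [trace_re_eq_sum] at h
  ext i j
  have h1 : ∀ j' ∈ Finset.univ, (0:ℝ) ≤ ∑ i, Complex.normSq (B i j') :=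
    fun j' _ => Finset.sum_nonneg fun i _ => Complex.normSq_nonneg _
  have h2 := (Finset.sum_eq_zero_iff_of_nonneg h1).mp h j (Finset.mem_univ j)
  have h3 : ∀ i' ∈ Finset.univ, (0:ℝ) ≤ Complex.normSq (B i' j) :=
    fun i' _ => Complex.normSq_nonneg _
  have h4 := (Finset.sum_eq_zero_iff_of_nonneg h3).mp h2 i (Finset.mem_univ i)
  simpa using Complex.normSq_eq_zero.mp h4

private lemma cpos_re {z : ℂ} (h : 0 < z) : 0 < z.re := (Complex.lt_def.mp h).1

private lemma cinv_pos {z : ℂ} (h : 0 < z) : 0 < z⁻¹ := by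
  have him : (0:ℂ).im = z.im := (Complex.lt_def.mp h).2
  have hre : 0 < z.re := (Complex.lt_def.mp h).1
  have hz : z = ((z.re : ℝ) : ℂ) := Complex.ext rfl (by simpa using him.symm)
  rw [hz, ← Complex.ofReal_inv]
  exact Complex.zero_lt_real.mpr (by positivity)

private lemma logdet_lt {M : ℕ} (S B : Matrix (Fin M) (Fin M) ℂ) (hS : S.PosSemidef)
    (hB : B.PosSemidef) (w : Fin M → ℂ) (hw : w ≠ 0) :
    Real.log ((1 + (1 + S)⁻¹ * B).det.re) <
      Real.log ((1 + (1 + S)⁻¹ * (B + vecMulVec w (star w))).det.re) := by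
  set A : Matrix (Fin M) (Fin M) ℂ := 1 + S with hA
  have hApd : A.PosDef := Matrix.PosDef.add_posSemidef Matrix.PosDef.one hS
  have hC : (A + B).PosDef := hApd.add_posSemidef hB
  have hkey : ∀ D : Matrix (Fin M) (Fin M) ℂ, (1 + A⁻¹ * D).det = A.det⁻¹ * (A + D).det := by
    intro D
    have h1 : (1 : Matrix (Fin M) (Fin M) ℂ) + A⁻¹ * D = A⁻¹ * (A + D) := by
      rw [Matrix.mul_add, Matrix.nonsing_inv_mul _ hApd.det_pos.ne'.isUnit]
    rw [h1, Matrix.det_mul, Matrix.det_nonsing_inv, Ring.inverse_eq_inv']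
  set C := A + B with hCdef
  set t := star w ⬝ᵥ C⁻¹ *ᵥ w with htdef
  have ht : 0 < t := hC.inv.dotProduct_mulVec_pos hw
  have hrank1 : C + vecMulVec w (star w)
      = C * (1 + Matrix.replicateCol Unit (C⁻¹ *ᵥ w) * Matrix.replicateRow Unit (star w)) := by
    rw [Matrix.mul_add, Matrix.mul_one, Matrix.replicateCol_mulVec, ← Matrix.mul_assoc,
      ← Matrix.mul_assoc, Matrix.mul_nonsing_inv _ hC.det_pos.ne'.isUnit, Matrix.one_mul,
      vecMulVec_eq Unit]
  have hdet2 : (C + vecMulVec w (star w)).det = C.det * (1 + t) := by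
    rw [hrank1, Matrix.det_mul, Matrix.det_one_add_replicateCol_mul_replicateRow, Matrix.dotProduct_mulVec, htdef,
      Matrix.dotProduct_mulVec]
  have hd1 : 0 < A.det⁻¹ * C.det := mul_pos (cinv_pos hApd.det_pos) hC.det_pos
  have hlt : A.det⁻¹ * C.det < A.det⁻¹ * (C + vecMulVec w (star w)).det := by
    rw [hdet2, ← mul_assoc]
    calc A.det⁻¹ * C.det = A.det⁻¹ * C.det * 1 := (mul_one _).symm
      _ < A.det⁻¹ * C.det * (1 + t) :=
        mul_lt_mul_of_pos_left (lt_add_of_pos_right _ ht) hd1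
  have hassoc : A + (B + vecMulVec w (star w)) = C + vecMulVec w (star w) := by
    rw [hCdef]; exact (add_assoc A B (vecMulVec w (star w))).symm
  rw [hkey B, hkey (B + vecMulVec w (star w)), hassoc, ← hCdef]
  exact Real.log_lt_log (cpos_re hd1) ((Complex.lt_def.mp hlt).1)


/-- Rate of a user in the two-user MIMO interference channel: `Hd` is the direct channel,
`Hc` the cross (interfering) channel, `Qd` the user's own covariance and `Qc` the
interferer's covariance:
`R = log det (I + (I + Hc Qc Hcᴴ)⁻¹ Hd Qd Hdᴴ)`. -/
noncomputable def rate2 {N M : ℕ} (Hd Hc : Matrix (Fin M) (Fin N) ℂ)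
    (Qd Qc : Matrix (Fin N) (Fin N) ℂ) : ℝ :=
  Real.log ((1 + (1 + Hc * Qc * Hcᴴ)⁻¹ * (Hd * Qd * Hdᴴ)).det.re)

/-- Feasibility of a pair of covariance matrices. -/
def Feasible2 {N : ℕ} (P1 P2 : ℝ) (Q1 Q2 : Matrix (Fin N) (Fin N) ℂ) : Prop :=
  Q1.PosSemidef ∧ Q1.trace.re ≤ P1 ∧ Q2.PosSemidef ∧ Q2.trace.re ≤ P2

/-- Pareto optimality for the two-user channel with channels `H11, H12, H21, H22`
(user 1's rate is `rate2 H11 H12 Q1 Q2`, user 2's rate is `rate2 H22 H21 Q2 Q1`). -/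
def ParetoOptimal2 {N M : ℕ} (H11 H12 H21 H22 : Matrix (Fin M) (Fin N) ℂ)
    (P1 P2 : ℝ) (Q1 Q2 : Matrix (Fin N) (Fin N) ℂ) : Prop :=
  Feasible2 P1 P2 Q1 Q2 ∧
    ¬ ∃ Q1' Q2' : Matrix (Fin N) (Fin N) ℂ, Feasible2 P1 P2 Q1' Q2' ∧
      (rate2 H11 H12 Q1 Q2 ≤ rate2 H11 H12 Q1' Q2' ∧
        rate2 H22 H21 Q2 Q1 ≤ rate2 H22 H21 Q2' Q1') ∧
      (rate2 H11 H12 Q1 Q2 < rate2 H11 H12 Q1' Q2' ∨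
        rate2 H22 H21 Q2 Q1 < rate2 H22 H21 Q2' Q1')

/-- **Corollary 1.** In the two-user symmetric case (`M₁ = M₂ = M`), if `H11` and `H21`
have full row rank `M`, there is `v` with `H11 v ≠ 0` and `H21 v = 0`, and `H21 H11ᴴ` is
invertible, then for any Pareto-optimal pair `(Q1, Q2)` the column space of `Q1` is
contained in the column span of `[H11ᴴ, (I − P) H11ᴴ]`, where
`P = H21ᴴ (H21 H21ᴴ)⁻¹ H21` is the orthogonal projection onto `range H21ᴴ`. -/
theorem stmt10 {N M : ℕ} (H11 H12 H21 H22 : Matrix (Fin M) (Fin N) ℂ)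
    (P1 P2 : ℝ) (hP1 : 0 < P1) (hP2 : 0 < P2)
    (hrank11 : H11.rank = M) (hrank21 : H21.rank = M)
    (v : Fin N → ℂ) (hv1 : H11 *ᵥ v ≠ 0) (hv2 : H21 *ᵥ v = 0)
    (hinv : IsUnit (H21 * H11ᴴ))
    (Q1 Q2 : Matrix (Fin N) (Fin N) ℂ)
    (hPareto : ParetoOptimal2 H11 H12 H21 H22 P1 P2 Q1 Q2) :
    LinearMap.range Q1.mulVecLin ≤
      LinearMap.range
        (Matrix.fromCols H11ᴴ
          ((1 - H21ᴴ * (H21 * H21ᴴ)⁻¹ * H21) * H11ᴴ)).mulVecLin := by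
  classical
  obtain ⟨⟨hQ1psd, hQ1tr, hQ2psd, hQ2tr⟩, hOpt⟩ := hPareto
  set Pm : Matrix (Fin N) (Fin N) ℂ := H21ᴴ * (H21 * H21ᴴ)⁻¹ * H21 with hPm
  set F : Matrix (Fin N) (Fin M ⊕ Fin M) ℂ := fromCols H11ᴴ ((1 - Pm) * H11ᴴ) with hFdef
  set Sf : Submodule ℂ (Fin N → ℂ) := LinearMap.range F.mulVecLin with hSfdef
  -- invertibility of H21 * H21ᴴ
  have hGunit : IsUnit (H21 * H21ᴴ) := by
    rw [← Matrix.mulVec_surjective_iff_isUnit]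
    have hrk : (H21 * H21ᴴ).rank = M := by
      rw [Matrix.rank_self_mul_conjTranspose]; exact hrank21
    have htop : LinearMap.range (H21 * H21ᴴ).mulVecLin = ⊤ := by
      apply Submodule.eq_top_of_finrank_eq
      rw [show Module.finrank ℂ ↥(LinearMap.range (H21 * H21ᴴ).mulVecLin)
        = (H21 * H21ᴴ).rank from rfl, hrk]
      simp
    intro y
    exact LinearMap.range_eq_top.mp htop y
  have hGdet : IsUnit (H21 * H21ᴴ).det := (Matrix.isUnit_iff_isUnit_det _).mp hGunit
  have hinvdet : IsUnit (H21 * H11ᴴ).det := (Matrix.isUnit_iff_isUnit_det _).mp hinv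
  -- membership of columns
  have h11mem : ∀ a : Fin M → ℂ, H11ᴴ *ᵥ a ∈ Sf := by
    intro a
    refine ⟨Sum.elim a 0, ?_⟩
    rw [Matrix.mulVecLin_apply, hFdef, fromCols_mulVec_sumElim]
    simp
  have hPmH : Pm * H11ᴴ * ((H21 * H11ᴴ)⁻¹ * (H21 * H21ᴴ)) = H21ᴴ := by
    rw [hPm]
    have h1 : H21ᴴ * (H21 * H21ᴴ)⁻¹ * H21 * H11ᴴ * ((H21 * H11ᴴ)⁻¹ * (H21 * H21ᴴ))
        = H21ᴴ * (H21 * H21ᴴ)⁻¹ * ((H21 * H11ᴴ) * (H21 * H11ᴴ)⁻¹) * (H21 * H21ᴴ) := by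
      simp only [Matrix.mul_assoc]
    rw [h1, Matrix.mul_nonsing_inv _ hinvdet, Matrix.mul_one, Matrix.mul_assoc,
      Matrix.nonsing_inv_mul _ hGdet, Matrix.mul_one]
  have h21mem : ∀ a : Fin M → ℂ, H21ᴴ *ᵥ a ∈ Sf := by
    intro a
    set b := ((H21 * H11ᴴ)⁻¹ * (H21 * H21ᴴ)) *ᵥ a with hb
    refine ⟨Sum.elim b (-b), ?_⟩
    rw [Matrix.mulVecLin_apply, hFdef, fromCols_mulVec_sumElim]
    have hexp : (1 - Pm) * H11ᴴ = H11ᴴ - Pm * H11ᴴ := by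
      rw [Matrix.sub_mul, Matrix.one_mul]
    have hPb : (Pm * H11ᴴ) *ᵥ b = H21ᴴ *ᵥ a := by
      rw [hb, Matrix.mulVec_mulVec, hPmH]
    rw [Matrix.mulVec_neg, hexp, Matrix.sub_mulVec, ← hPb]
    abel
  -- Euclidean space machinery
  set e := WithLp.equiv 2 (Fin N → ℂ) with he
  set S : Submodule ℂ (EuclideanSpace ℂ (Fin N)) :=
    Sf.comap (WithLp.linearEquiv 2 ℂ (Fin N → ℂ)).toLinearMap with hSdef
  have hmemS : ∀ x : EuclideanSpace ℂ (Fin N), x ∈ S ↔ e x ∈ Sf := fun x => Iff.rfl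
  set T : EuclideanSpace ℂ (Fin N) →L[ℂ] EuclideanSpace ℂ (Fin N) :=
    S.subtypeL.comp (Submodule.orthogonalProjectionOnto S) with hTdef
  set Pi1 : Matrix (Fin N) (Fin N) ℂ :=
    Matrix.toEuclideanLin.symm (T : EuclideanSpace ℂ (Fin N) →ₗ[ℂ] EuclideanSpace ℂ (Fin N))
    with hPidef
  have hPieq : Matrix.toEuclideanLin Pi1 = (T : EuclideanSpace ℂ (Fin N) →ₗ[ℂ] _) :=
    LinearEquiv.apply_symm_apply _ _
  have hmv : ∀ x : Fin N → ℂ, Pi1 *ᵥ x = e (T (e.symm x)) := by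
    intro x
    have h1 : Matrix.toEuclideanLin Pi1 (e.symm x) = T (e.symm x) := by rw [hPieq]; rfl
    rw [Matrix.toEuclideanLin_apply] at h1
    have := congrArg e h1
    rw [← h1]; rfl
  have hTmem : ∀ x, T x ∈ S := fun x => (Submodule.orthogonalProjectionOnto S x).2
  have hTid : ∀ x, x ∈ S → T x = x := fun x hx =>
    congrArg Subtype.val (Submodule.orthogonalProjectionOnto_mem_subspace_eq_self (⟨x, hx⟩ : S))
  have hsub : ∀ x, x - T x ∈ Sᗮ := fun x => Submodule.sub_starProjection_mem_orthogonal x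
  have hPiH : Pi1ᴴ = Pi1 := by
    apply Matrix.toEuclideanLin.injective
    rw [Matrix.toEuclideanLin_conjTranspose_eq_adjoint, hPieq]
    exact ((LinearMap.eq_adjoint_iff _ _).mpr
      (fun x y => Submodule.inner_starProjection_left_eq_right S x y)).symm
  have hPiPi : Pi1 * Pi1 = Pi1 := by
    apply ext_mulVec; intro x
    rw [← Matrix.mulVec_mulVec, hmv, hmv, Equiv.symm_apply_apply, hTid _ (hTmem _)]
  have hPirange : ∀ x : Fin N → ℂ, Pi1 *ᵥ x ∈ Sf := fun x => by
    rw [hmv]; exact (hmemS _).mp (hTmem _)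
  have hker : ∀ (H : Matrix (Fin M) (Fin N) ℂ), (∀ a, Hᴴ *ᵥ a ∈ Sf) →
      ∀ y : EuclideanSpace ℂ (Fin N), y ∈ Sᗮ → H *ᵥ (e y) = 0 := by
    intro H hH y hy
    funext i
    have hmem : (e.symm (Hᴴ *ᵥ Pi.single i 1)) ∈ S :=
      (hmemS _).mpr (by simpa using hH (Pi.single i 1))
    have h0 := (Submodule.mem_orthogonal S y).mp hy _ hmem
    rw [EuclideanSpace.inner_eq_star_dotProduct] at h0
    simp only [he, Equiv.apply_symm_apply, WithLp.equiv_symm_apply, WithLp.ofLp_toLp] at h0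
    rw [Matrix.star_mulVec, Matrix.conjTranspose_conjTranspose] at h0
    have hsingle : star (Pi.single i 1 : Fin M → ℂ) = Pi.single i 1 := by
      funext k; by_cases hk : k = i <;> simp [Pi.single_apply, hk]
    rw [hsingle, dotProduct_comm, ← Matrix.dotProduct_mulVec, single_dotProduct, one_mul] at h0
    exact h0
  have hprod : ∀ (H : Matrix (Fin M) (Fin N) ℂ), (∀ a, Hᴴ *ᵥ a ∈ Sf) → H * Pi1 = H := by
    intro H hH
    apply ext_mulVec; intro x
    rw [← Matrix.mulVec_mulVec, hmv]
    have h1 := hker H hH (e.symm x - T (e.symm x)) (hsub _)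
    rw [show e (e.symm x - T (e.symm x)) = e (e.symm x) - e (T (e.symm x)) from rfl, Matrix.mulVec_sub, sub_eq_zero] at h1
    have h2 : e (e.symm x) = x := Equiv.apply_symm_apply _ _
    rw [h2] at h1
    exact h1.symm
  have hH11P : H11 * Pi1 = H11 := hprod H11 h11mem
  have hH21P : H21 * Pi1 = H21 := hprod H21 h21mem
  -- trace identity
  set E1 : Matrix (Fin N) (Fin N) ℂ := 1 - Pi1 with hE1
  have hE1H : E1ᴴ = E1 := by
    rw [hE1, Matrix.conjTranspose_sub, Matrix.conjTranspose_one, hPiH]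
  have htr : Q1.trace = (Pi1 * Q1 * Pi1ᴴ).trace + (E1 * Q1 * E1ᴴ).trace := by
    rw [hPiH, hE1H, hE1]
    have h1 : ((1 - Pi1) * Q1 * (1 - Pi1)) = Q1 - Pi1 * Q1 - Q1 * Pi1 + Pi1 * Q1 * Pi1 := by
      noncomm_ring
    have h2 : (Pi1 * Q1 * Pi1).trace = (Pi1 * Q1).trace := by
      rw [Matrix.trace_mul_cycle, hPiPi]
    have h3 : (Q1 * Pi1).trace = (Pi1 * Q1).trace := Matrix.trace_mul_comm _ _
    rw [h1]
    simp only [Matrix.trace_add, Matrix.trace_sub, h2, h3]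
    ring
  obtain ⟨R, hR⟩ : ∃ R : Matrix (Fin N) (Fin N) ℂ, Q1 = Rᴴ * R := by
    open MatrixOrder in exact CStarAlgebra.nonneg_iff_eq_star_mul_self.mp hQ1psd.nonneg
  have hEQE : E1 * Q1 * E1ᴴ = (R * E1ᴴ)ᴴ * (R * E1ᴴ) := by
    rw [Matrix.conjTranspose_mul, Matrix.conjTranspose_conjTranspose, hR, hE1H]
    simp only [Matrix.mul_assoc]
  by_cases hcase : R * E1ᴴ = 0
  · -- column space already inside
    have hEQ : E1 * Q1 = 0 := by
      have h1 : E1 * Q1 = (R * E1ᴴ)ᴴ * R := by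
        rw [Matrix.conjTranspose_mul, Matrix.conjTranspose_conjTranspose, hR,
          Matrix.mul_assoc]
      rw [h1, hcase]
      simp
    have hQ1P : Pi1 * Q1 = Q1 := by
      have h1 : (1 - Pi1) * Q1 = 0 := hEQ
      rw [Matrix.sub_mul, Matrix.one_mul, sub_eq_zero] at h1
      exact h1.symm
    rintro y ⟨x, rfl⟩
    rw [Matrix.mulVecLin_apply, ← hQ1P, ← Matrix.mulVec_mulVec]
    exact hPirange _
  · -- strict improvement exists: contradiction with Pareto optimality
    exfalso
    have hδpos : 0 < (E1 * Q1 * E1ᴴ).trace.re := by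
      rw [hEQE]
      rcases lt_or_eq_of_le (trace_re_nonneg (R * E1ᴴ)) with h | h
      · exact h
      · exact absurd (eq_zero_of_trace_re h.symm) hcase
    set t1 := (Pi1 * Q1 * Pi1ᴴ).trace.re with ht1
    have ht1lt : t1 < P1 := by
      have h := congrArg Complex.re htr
      rw [Complex.add_re] at h
      have : Q1.trace.re = t1 + (E1 * Q1 * E1ᴴ).trace.re := h
      linarith
    have hvne : v ≠ 0 := fun h => hv1 (by rw [h, Matrix.mulVec_zero])
    set nv := ∑ i, Complex.normSq (v i) with hnv
    have hnvpos : 0 < nv := by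
      obtain ⟨i, hi⟩ := Function.ne_iff.mp hvne
      exact Finset.sum_pos' (fun j _ => Complex.normSq_nonneg _)
        ⟨i, Finset.mem_univ i, Complex.normSq_pos.mpr hi⟩
    set ε := (P1 - t1) / nv with hε
    have hεpos : 0 < ε := div_pos (by linarith) hnvpos
    set c := Real.sqrt ε with hc
    have hcpos : 0 < c := Real.sqrt_pos.mpr hεpos
    set u : Fin N → ℂ := (c : ℂ) • v with hu
    set W := vecMulVec u (star u) with hW
    have hWpsd : W.PosSemidef := by
      rw [hW, vecMulVec_eq Unit, ← Matrix.conjTranspose_replicateCol]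
      exact Matrix.posSemidef_self_mul_conjTranspose _
    have hWtr : W.trace.re = P1 - t1 := by
      rw [hW]
      have h1 : (vecMulVec u (star u)).trace = ∑ i, u i * star (u i) := by
        simp [Matrix.trace, Matrix.diag, Matrix.vecMulVec_apply]
      rw [h1, Complex.re_sum]
      have h2 : ∀ i, (u i * star (u i)).re = Complex.normSq (u i) := by
        intro i; rw [Complex.star_def, Complex.mul_conj]; simp
      simp only [h2, hu]
      have h3 : ∀ i, Complex.normSq ((c:ℂ) * v i) = ε * Complex.normSq (v i) := by
        intro i
        rw [Complex.normSq_mul, Complex.normSq_ofReal, hc, Real.mul_self_sqrt hεpos.le]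
      simp only [Pi.smul_apply, smul_eq_mul, Complex.star_def, Complex.mul_conj, Complex.ofReal_re, h3, ← Finset.mul_sum, ← hnv]
      rw [hε]
      field_simp
    set Q1' := Pi1 * Q1 * Pi1ᴴ + W with hQ1'
    have hQ1'psd : Q1'.PosSemidef := (hQ1psd.mul_mul_conjTranspose_same Pi1).add hWpsd
    have hQ1'tr : Q1'.trace.re = P1 := by
      rw [hQ1', Matrix.trace_add, Complex.add_re, hWtr, ← ht1]
      ring
    have hfeas : Feasible2 P1 P2 Q1' Q2 := ⟨hQ1'psd, le_of_eq hQ1'tr, hQ2psd, hQ2tr⟩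
    have hcongr : ∀ (H : Matrix (Fin M) (Fin N) ℂ), H * Pi1 = H →
        H * Q1' * Hᴴ = H * Q1 * Hᴴ + vecMulVec (H *ᵥ u) (star (H *ᵥ u)) := by
      intro H hH
      have hHc : Pi1ᴴ * Hᴴ = Hᴴ := by
        have := congrArg Matrix.conjTranspose hH
        rwa [Matrix.conjTranspose_mul] at this
      rw [hQ1', Matrix.mul_add, Matrix.add_mul]
      congr 1
      · calc H * (Pi1 * Q1 * Pi1ᴴ) * Hᴴ = (H * Pi1) * Q1 * (Pi1ᴴ * Hᴴ) := by
              simp only [Matrix.mul_assoc]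
          _ = H * Q1 * Hᴴ := by rw [hH, hHc, Matrix.mul_assoc]
      · rw [hW, vecMulVec_eq Unit, vecMulVec_eq Unit]
        calc H * (replicateCol Unit u * replicateRow Unit (star u)) * Hᴴ
            = (H * replicateCol Unit u) * (replicateRow Unit (star u) * Hᴴ) := by simp only [Matrix.mul_assoc]
          _ = replicateCol Unit (H *ᵥ u) * replicateRow Unit (star (H *ᵥ u)) := by
              rw [← Matrix.replicateCol_mulVec, Matrix.star_mulVec, Matrix.replicateRow_vecMul]
    have h11eq := hcongr H11 hH11P
    have h21eq : H21 * Q1' * H21ᴴ = H21 * Q1 * H21ᴴ := by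
      rw [hcongr H21 hH21P]
      have h0 : H21 *ᵥ u = 0 := by
        rw [hu, Matrix.mulVec_smul, hv2, smul_zero]
      rw [h0]
      have : vecMulVec (0 : Fin M → ℂ) (star (0 : Fin M → ℂ)) = 0 := by
        ext i j; simp [Matrix.vecMulVec_apply]
      rw [this, add_zero]
    have hrate2eq : rate2 H22 H21 Q2 Q1' = rate2 H22 H21 Q2 Q1 := by
      unfold rate2; rw [h21eq]
    have hune : H11 *ᵥ u ≠ 0 := by
      rw [hu, Matrix.mulVec_smul]
      exact smul_ne_zero (by exact_mod_cast hcpos.ne') hv1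
    have hrate1lt : rate2 H11 H12 Q1 Q2 < rate2 H11 H12 Q1' Q2 := by
      unfold rate2
      rw [h11eq]
      exact logdet_lt _ _ (hQ2psd.mul_mul_conjTranspose_same H12)
        (hQ1psd.mul_mul_conjTranspose_same H11) _ hune
    exact hOpt ⟨Q1', Q2, hfeas, ⟨hrate1lt.le, hrate2eq.ge⟩, Or.inl hrate1lt⟩
end

section
/- Let Υ ∈ ℂ^{N×m} have orthonormal columns (Υ^H Υ = I_m), let 1 ≤ M ≤ m, let P > 0, and let Q ∈ ℂ^{N×N} be positive semidefinite with range(Q) ⊆ range(Υ), rank(Q) ≤ M, and tr(Q) = P. Then there exist a matrix U ∈ ℂ^{m×M} with U^H U = I_M and nonnegative real numbers λ_1, …, λ_M with Σ_{k=1}^M λ_k = P such that Q = Υ U Λ U^H Υ^H, where Λ = diag(λ_1, …, λ_M). (Theorem 2, the parameterization direction: every Pareto-optimal covariance lies in the image of the product manifold V_{m,M} × H_M.) -/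
open Matrix
open scoped ComplexOrder

/-- **Theorem 2, parameterization direction.** If `Υ ∈ ℂ^{N×m}` has orthonormal columns,
`1 ≤ M ≤ m`, `P > 0`, and `Q ∈ ℂ^{N×N}` is positive semidefinite with
`range Q ⊆ range Υ`, `rank Q ≤ M` and `tr Q = P`, then `Q = Υ U Λ Uᴴ Υᴴ` for some
`U ∈ ℂ^{m×M}` with `Uᴴ U = I` and `Λ = diag (λ₁, …, λ_M)` with `λ_k ≥ 0` and
`∑ k, λ_k = P`. -/
theorem stmt11 {N m M : ℕ} (hM1 : 1 ≤ M) (hMm : M ≤ m)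
    (Υ : Matrix (Fin N) (Fin m) ℂ) (hΥ : Υᴴ * Υ = 1)
    (P : ℝ) (hP : 0 < P)
    (Q : Matrix (Fin N) (Fin N) ℂ) (hQ : Q.PosSemidef)
    (hrange : LinearMap.range Q.mulVecLin ≤ LinearMap.range Υ.mulVecLin)
    (hrank : Q.rank ≤ M) (htr : Q.trace = (P : ℂ)) :
    ∃ (U : Matrix (Fin m) (Fin M) ℂ) (lam : Fin M → ℝ),
      Uᴴ * U = 1 ∧ (∀ k, 0 ≤ lam k) ∧ (∑ k, lam k = P) ∧
      Q = Υ * U * Matrix.diagonal (fun k => (lam k : ℂ)) * Uᴴ * Υᴴ := by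
  classical
  -- Step 1: the projector `Υ Υᴴ` absorbs `Q`.
  have hproj : Υ * Υᴴ * Q = Q := by
    have h1 : ∀ v : Fin N → ℂ, (Υ * Υᴴ * Q) *ᵥ v = Q *ᵥ v := by
      intro v
      obtain ⟨x, hx⟩ := hrange (LinearMap.mem_range_self _ v)
      simp only [Matrix.mulVecLin_apply] at hx
      calc (Υ * Υᴴ * Q) *ᵥ v = (Υ * Υᴴ) *ᵥ (Q *ᵥ v) := by rw [← Matrix.mulVec_mulVec]
        _ = (Υ * Υᴴ) *ᵥ (Υ *ᵥ x) := by rw [hx]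
        _ = (Υ * Υᴴ * Υ) *ᵥ x := by rw [Matrix.mulVec_mulVec]
        _ = Υ *ᵥ x := by rw [Matrix.mul_assoc, hΥ, Matrix.mul_one]
        _ = Q *ᵥ v := hx
    ext i j
    have := congrFun (h1 (Pi.single j 1)) i
    simpa [Matrix.mulVec_single] using this
  have hproj' : Q * (Υ * Υᴴ) = Q := by
    have := congrArg Matrix.conjTranspose hproj
    simpa [Matrix.conjTranspose_mul, hQ.isHermitian.eq, mul_assoc] using this
  set R : Matrix (Fin m) (Fin m) ℂ := Υᴴ * Q * Υ with hRdef
  have hQR : Q = Υ * R * Υᴴ := by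
    calc Q = Υ * Υᴴ * (Q * (Υ * Υᴴ)) := by rw [hproj', hproj]
      _ = Υ * R * Υᴴ := by simp only [hRdef, Matrix.mul_assoc]
  have hR : R.PosSemidef := by
    have := hQ.conjTranspose_mul_mul_same Υ
    simpa [hRdef] using this
  have hH : R.IsHermitian := hR.isHermitian
  -- trace of R
  have hRtr : R.trace = (P : ℂ) := by
    rw [hRdef, Matrix.trace_mul_cycle, hproj, htr]
  -- rank of R
  have hRrank : R.rank ≤ M := by
    refine le_trans ?_ hrank
    calc R.rank ≤ (Υᴴ * Q).rank := Matrix.rank_mul_le_left _ _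
      _ ≤ Q.rank := Matrix.rank_mul_le_right _ _
  -- spectral data
  set V : Matrix (Fin m) (Fin m) ℂ := (hH.eigenvectorUnitary : Matrix (Fin m) (Fin m) ℂ)
    with hVdef
  set eig : Fin m → ℝ := hH.eigenvalues with heig
  have hspec : R = V * Matrix.diagonal (fun i => (eig i : ℂ)) * Vᴴ := by
    have := hH.spectral_theorem
    exact this
  have hVV : Vᴴ * V = 1 := by
    have := Matrix.UnitaryGroup.star_mul_self hH.eigenvectorUnitary
    simpa [hVdef, Matrix.star_eq_conjTranspose] using this
  have heignn : ∀ i, 0 ≤ eig i := fun i => hR.eigenvalues_nonneg i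
  -- the set of nonzero eigenvalues
  set s : Finset (Fin m) := Finset.univ.filter (fun i => eig i ≠ 0) with hs
  have hscard : s.card ≤ M := by
    have h1 := hH.rank_eq_card_non_zero_eigs
    have h2 : Fintype.card {i // eig i ≠ 0} = s.card := by
      rw [hs]
      exact Fintype.card_subtype _
    rw [← h2, heig, ← h1]
    exact hRrank
  obtain ⟨t, hst, htcard⟩ := Finset.exists_superset_card_eq hscard
    (by simpa using hMm)
  have heig_zero : ∀ i, i ∉ t → eig i = 0 := by
    intro i hi
    by_contra h
    exact hi (hst (by simp [hs, h]))
  set e : Fin M → Fin m := fun k => (t.orderIsoOfFin htcard k : Fin m) with he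
  have he_inj : Function.Injective e := by
    intro a b hab
    exact (t.orderIsoOfFin htcard).injective (Subtype.ext hab)
  have he_mem : ∀ k, e k ∈ t := fun k => (t.orderIsoOfFin htcard k).2
  -- sums over `Fin M` via `e` equal sums over all of `Fin m`
  have hsum_e : ∀ f : Fin m → ℂ, (∀ i, i ∉ t → f i = 0) →
      ∑ k : Fin M, f (e k) = ∑ i : Fin m, f i := by
    intro f hf
    have h1 : ∑ k : Fin M, f (e k) = ∑ i ∈ t, f i := by
      rw [← Finset.sum_attach t f]
      exact Fintype.sum_equiv (t.orderIsoOfFin htcard).toEquiv _ _ (fun k => rfl)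
    rw [h1]
    exact Finset.sum_subset (Finset.subset_univ t) (fun i _ hi => hf i hi)
  refine ⟨V.submatrix id e, fun k => eig (e k), ?_, fun k => heignn _, ?_, ?_⟩
  · -- orthonormal columns
    ext k l
    have h1 : ((V.submatrix id e)ᴴ * V.submatrix id e) k l = (Vᴴ * V) (e k) (e l) := by
      simp [Matrix.mul_apply, Matrix.conjTranspose_apply, Matrix.submatrix_apply]
    rw [h1, hVV]
    by_cases hkl : k = l
    · subst hkl; simp [Matrix.one_apply]
    · have : e k ≠ e l := fun h => hkl (he_inj h)
      simp [Matrix.one_apply, hkl, this]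
  · -- sum of eigenvalues is P
    have htrace_sum : ∑ i : Fin m, (eig i : ℂ) = (P : ℂ) := by
      have h1 : R.trace = ∑ i : Fin m, (eig i : ℂ) := by
        rw [hspec, Matrix.trace_mul_cycle, hVV, one_mul, Matrix.trace_diagonal]
      rw [← h1, hRtr]
    have h2 : ∑ k : Fin M, ((eig (e k) : ℂ)) = (P : ℂ) := by
      rw [hsum_e (fun i => (eig i : ℂ)) (fun i hi => by simp [heig_zero i hi])]
      exact htrace_sum
    have h3 : ((∑ k : Fin M, eig (e k) : ℝ) : ℂ) = (P : ℂ) := by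
      push_cast
      exact h2
    exact_mod_cast h3
  · -- the decomposition
    have hkey : V.submatrix id e * Matrix.diagonal (fun k => (eig (e k) : ℂ)) *
        (V.submatrix id e)ᴴ = V * Matrix.diagonal (fun i => (eig i : ℂ)) * Vᴴ := by
      ext i j
      have hL : (V.submatrix id e * Matrix.diagonal (fun k => (eig (e k) : ℂ)) *
          (V.submatrix id e)ᴴ) i j
          = ∑ k : Fin M, V i (e k) * (eig (e k) : ℂ) * star (V j (e k)) := by
        simp [Matrix.mul_apply, Matrix.diagonal_apply, Matrix.conjTranspose_apply,
          Matrix.submatrix_apply, mul_ite, ite_mul, mul_zero, zero_mul,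
          Finset.sum_ite_eq, Finset.sum_ite_eq']
      have hR' : (V * Matrix.diagonal (fun i => (eig i : ℂ)) * Vᴴ) i j
          = ∑ i' : Fin m, V i i' * (eig i' : ℂ) * star (V j i') := by
        simp [Matrix.mul_apply, Matrix.diagonal_apply, Matrix.conjTranspose_apply,
          mul_ite, ite_mul, mul_zero, zero_mul, Finset.sum_ite_eq, Finset.sum_ite_eq']
      rw [hL, hR']
      exact hsum_e (fun i' => V i i' * (eig i' : ℂ) * star (V j i'))
        (fun i' hi' => by simp [heig_zero i' hi'])
    show Q = Υ * (V.submatrix id e) * Matrix.diagonal (fun k => (eig (e k) : ℂ)) *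
      (V.submatrix id e)ᴴ * Υᴴ
    rw [hQR, hspec, ← hkey]
    simp only [Matrix.mul_assoc]
end

section
/- Let U ∈ ℂ^{n×p} satisfy U^H U = I_p and let G ∈ ℂ^{n×p} be arbitrary. Define Z := G − U G^H U. Then (i) Z is in the tangent space of the Stiefel manifold at U, i.e., Z^H U + U^H Z = 0; and (ii) for every Δ ∈ ℂ^{n×p} with Δ^H U + U^H Δ = 0, one has Re tr(G^H Δ) = Re tr(Z^H (I_n − ½ U U^H) Δ). (Gradient formula on the Stiefel manifold with respect to the canonical metric, equation (46).) -/
open Matrix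

/-- **Gradient formula on the Stiefel manifold (equation (46)).** Let `U ∈ ℂ^{n×p}` with
`Uᴴ U = I` and let `G ∈ ℂ^{n×p}`. Define `Z := G − U Gᴴ U`. Then (i) `Z` lies in the
tangent space of the Stiefel manifold at `U`, i.e. `Zᴴ U + Uᴴ Z = 0`; and (ii) for every
tangent vector `Δ` at `U`, `Re tr (Gᴴ Δ) = Re tr (Zᴴ (I − ½ U Uᴴ) Δ)`. -/
theorem stmt14 {n p : ℕ} (U G : Matrix (Fin n) (Fin p) ℂ) (hU : Uᴴ * U = 1) :
    ((G - U * Gᴴ * U)ᴴ * U + Uᴴ * (G - U * Gᴴ * U) = 0) ∧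
      ∀ Δ : Matrix (Fin n) (Fin p) ℂ, Δᴴ * U + Uᴴ * Δ = 0 →
        ((Gᴴ * Δ).trace).re =
          (((G - U * Gᴴ * U)ᴴ *
            ((1 : Matrix (Fin n) (Fin n) ℂ) - (2 : ℂ)⁻¹ • (U * Uᴴ)) * Δ).trace).re := by
  have hU' : ∀ (q : ℕ) (X : Matrix (Fin p) (Fin q) ℂ), Uᴴ * (U * X) = X := fun q X => by
    rw [← Matrix.mul_assoc, hU, Matrix.one_mul]
  constructor
  · simp only [conjTranspose_sub, conjTranspose_mul, conjTranspose_conjTranspose,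
      Matrix.sub_mul, Matrix.mul_sub, Matrix.mul_assoc, hU', hU, Matrix.mul_one]
    abel
  · intro Δ hΔ
    have hΔU : Δᴴ * U = -(Uᴴ * Δ) := by linear_combination (norm := abel) hΔ
    have expand : (G - U * Gᴴ * U)ᴴ *
        ((1 : Matrix (Fin n) (Fin n) ℂ) - (2 : ℂ)⁻¹ • (U * Uᴴ)) * Δ =
        Gᴴ * Δ - (2 : ℂ)⁻¹ • (Gᴴ * (U * (Uᴴ * Δ)))
          - ((Uᴴ * (G * (Uᴴ * Δ))) - (2 : ℂ)⁻¹ • (Uᴴ * (G * (Uᴴ * Δ)))) := by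
      simp only [conjTranspose_sub, conjTranspose_mul, conjTranspose_conjTranspose,
        Matrix.sub_mul, Matrix.mul_sub, Matrix.mul_one, Matrix.one_mul,
        Matrix.mul_smul, Matrix.smul_mul, Matrix.mul_assoc, hU', smul_sub]
      abel
    rw [expand]
    set x := (Gᴴ * (U * (Uᴴ * Δ))).trace with hx
    set y := (Uᴴ * (G * (Uᴴ * Δ))).trace with hy
    have hconj : star y = -x := by
      rw [hy, ← Matrix.trace_conjTranspose]
      simp only [conjTranspose_mul, conjTranspose_conjTranspose]
      rw [Matrix.trace_mul_comm, hΔU]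
      simp only [Matrix.mul_neg, Matrix.neg_mul, Matrix.trace_neg, hx, Matrix.mul_assoc]
      rw [show U * (Uᴴ * (Δ * Gᴴ)) = (U * (Uᴴ * Δ)) * Gᴴ by
          simp only [Matrix.mul_assoc], Matrix.trace_mul_comm]
    have hre : (x + y).re = 0 := by
      have h2 : y.re = -x.re := by
        rw [← Complex.conj_re y]
        rw [show (starRingEnd ℂ) y = star y from rfl, hconj, Complex.neg_re]
      rw [Complex.add_re, h2]; ring
    have hsum : (Gᴴ * Δ - (2 : ℂ)⁻¹ • (Gᴴ * (U * (Uᴴ * Δ)))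
          - ((Uᴴ * (G * (Uᴴ * Δ))) - (2 : ℂ)⁻¹ • (Uᴴ * (G * (Uᴴ * Δ))))).trace
        = (Gᴴ * Δ).trace - (2 : ℂ)⁻¹ * (x + y) := by
      simp only [Matrix.trace_sub, Matrix.trace_smul, smul_eq_mul, ← hx, ← hy]
      ring
    rw [hsum]
    rw [Complex.sub_re, Complex.mul_re, hre]
    norm_num [Complex.inv_im]
end

section
/- Let U ∈ ℂ^{n×p} with U^H U = I_p, let Δ ∈ ℂ^{n×p} with A := U^H Δ skew-Hermitian (A^H = −A), and let Q ∈ ℂ^{n×p}, R ∈ ℂ^{p×p} satisfy Q R = (I − U U^H) Δ, Q^H Q = I_p, and U^H Q = 0. Define, for t ∈ ℝ, the p×p matrices M(t) and N(t) by stacking: [M(t); N(t)] = exp(t [[A, −R^H], [R, 0]]) [I_p; 0], where exp is the matrix exponential, and set U(t) := U M(t) + Q N(t). Then (i) U(t)^H U(t) = I_p for all t (the curve stays on the Stiefel manifold), (ii) U(0) = U, and (iii) the derivative of U(t) at t = 0 equals Δ. (Content of Theorem 3, the geodesic formula of Edelman et al.) -/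
open Matrix

/-- The geodesic curve of Edelman et al.: `U(t) = U M(t) + Q N(t)` where
`[M(t); N(t)] = exp (t [[A, −Rᴴ], [R, 0]]) [I; 0]`, i.e. `M(t)` and `N(t)` are the
`(1,1)` and `(2,1)` blocks of the matrix exponential. -/
noncomputable def geod {n p : ℕ} (U Q : Matrix (Fin n) (Fin p) ℂ)
    (A R : Matrix (Fin p) (Fin p) ℂ) (t : ℝ) : Matrix (Fin n) (Fin p) ℂ :=
  U * (NormedSpace.exp ((t : ℂ) • Matrix.fromBlocks A (-Rᴴ) R 0)).toBlocks₁₁ +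
    Q * (NormedSpace.exp ((t : ℂ) • Matrix.fromBlocks A (-Rᴴ) R 0)).toBlocks₂₁

section aux

variable {p : ℕ}

/-- entry evaluation as a linear map -/
def entryLM (a b : Fin p ⊕ Fin p) :
    Matrix (Fin p ⊕ Fin p) (Fin p ⊕ Fin p) ℂ →ₗ[ℂ] ℂ where
  toFun X := X a b
  map_add' _ _ := rfl
  map_smul' _ _ := rfl

theorem exp_entry_hasDerivAt (X : Matrix (Fin p ⊕ Fin p) (Fin p ⊕ Fin p) ℂ)
    (a b : Fin p ⊕ Fin p) :
    HasDerivAt (fun t : ℝ => NormedSpace.exp ((t : ℂ) • X) a b) (X a b) 0 := by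
  letI : NormedRing (Matrix (Fin p ⊕ Fin p) (Fin p ⊕ Fin p) ℂ) := Matrix.linftyOpNormedRing
  letI : NormedAlgebra ℂ (Matrix (Fin p ⊕ Fin p) (Fin p ⊕ Fin p) ℂ) :=
    Matrix.linftyOpNormedAlgebra
  letI : CompleteSpace (Matrix (Fin p ⊕ Fin p) (Fin p ⊕ Fin p) ℂ) :=
    FiniteDimensional.complete ℂ _
  have hf : HasDerivAt (fun u : ℂ => NormedSpace.exp (u • X)) X 0 := by
    have := hasDerivAt_exp_smul_const (𝕂 := ℂ) X (0 : ℂ)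
    rwa [zero_smul, NormedSpace.exp_zero, one_mul] at this
  have hL : HasDerivAt (fun u : ℂ => NormedSpace.exp (u • X) a b) (X a b) 0 := by
    have := ((entryLM a b).toContinuousLinearMap.hasFDerivAt
      (x := NormedSpace.exp ((0 : ℂ) • X))).comp_hasDerivAt (0 : ℂ) hf
    exact this
  have := hL.comp_ofReal (z := 0)
  simpa using this

end aux

/-- **Theorem 3 (geodesic formula of Edelman et al.).** Let `U ∈ ℂ^{n×p}` with
`Uᴴ U = I`, let `Δ` be such that `A := Uᴴ Δ` is skew-Hermitian, and let `Q, R` give the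
QR-type factorization `Q R = (I − U Uᴴ) Δ` with `Qᴴ Q = I` and `Uᴴ Q = 0`. Then the curve
`U(t) = U M(t) + Q N(t)` (i) stays on the Stiefel manifold: `U(t)ᴴ U(t) = I` for all `t`,
(ii) satisfies `U(0) = U`, and (iii) has derivative `Δ` at `t = 0` (entrywise). -/
theorem stmt16 {n p : ℕ} (U Δ Q : Matrix (Fin n) (Fin p) ℂ)
    (R : Matrix (Fin p) (Fin p) ℂ)
    (hU : Uᴴ * U = 1) (hA : (Uᴴ * Δ)ᴴ = -(Uᴴ * Δ))
    (hQR : Q * R = (1 - U * Uᴴ) * Δ) (hQ : Qᴴ * Q = 1) (hUQ : Uᴴ * Q = 0) :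
    (∀ t : ℝ, (geod U Q (Uᴴ * Δ) R t)ᴴ * geod U Q (Uᴴ * Δ) R t = 1) ∧
      geod U Q (Uᴴ * Δ) R 0 = U ∧
      ∀ i j, HasDerivAt (fun t : ℝ => geod U Q (Uᴴ * Δ) R t i j) (Δ i j) 0 := by
  set A := Uᴴ * Δ with hAdef
  set X : Matrix (Fin p ⊕ Fin p) (Fin p ⊕ Fin p) ℂ := Matrix.fromBlocks A (-Rᴴ) R 0 with hX
  have hXH : Xᴴ = -X := by
    rw [hX, fromBlocks_conjTranspose, hA, conjTranspose_neg, conjTranspose_conjTranspose,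
      conjTranspose_zero, Matrix.fromBlocks_neg, neg_neg, neg_zero]
  have hQU : Qᴴ * U = 0 := by
    have := congrArg conjTranspose hUQ
    rwa [conjTranspose_mul, conjTranspose_conjTranspose, conjTranspose_zero] at this
  have hunit : ∀ t : ℝ, (NormedSpace.exp ((t : ℂ) • X))ᴴ * NormedSpace.exp ((t : ℂ) • X) = 1 := by
    intro t
    have h1 : ((t : ℂ) • X)ᴴ = -((t : ℂ) • X) := by
      rw [conjTranspose_smul, hXH, Complex.star_def, Complex.conj_ofReal, smul_neg]
    rw [← Matrix.exp_conjTranspose, h1,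
      ← Matrix.exp_add_of_commute (-((t : ℂ) • X)) ((t : ℂ) • X) ((Commute.refl _).neg_left),
      neg_add_cancel, NormedSpace.exp_zero]
  refine ⟨?_, ?_, ?_⟩
  · intro t
    set E := NormedSpace.exp ((t : ℂ) • X) with hE
    set M := E.toBlocks₁₁ with hM
    set N := E.toBlocks₂₁ with hN
    have key : Mᴴ * M + Nᴴ * N = 1 := by
      have h2 : (Eᴴ * E).toBlocks₁₁ = Mᴴ * M + Nᴴ * N := by
        conv_lhs => rw [← fromBlocks_toBlocks E]
        rw [fromBlocks_conjTranspose, fromBlocks_multiply]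
        simp [toBlocks_fromBlocks₁₁, hM, hN]
      rw [← h2, hunit t, ← fromBlocks_one, toBlocks_fromBlocks₁₁]
    show (U * M + Q * N)ᴴ * (U * M + Q * N) = 1
    rw [conjTranspose_add, conjTranspose_mul, conjTranspose_mul, Matrix.add_mul, Matrix.mul_add, Matrix.mul_add]
    have e1 : Mᴴ * Uᴴ * (U * M) = Mᴴ * M := by
      rw [Matrix.mul_assoc, ← Matrix.mul_assoc Uᴴ U M, hU, Matrix.one_mul]
    have e2 : Mᴴ * Uᴴ * (Q * N) = 0 := by
      rw [Matrix.mul_assoc, ← Matrix.mul_assoc Uᴴ Q N, hUQ, Matrix.zero_mul, Matrix.mul_zero]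
    have e3 : Nᴴ * Qᴴ * (U * M) = 0 := by
      rw [Matrix.mul_assoc, ← Matrix.mul_assoc Qᴴ U M, hQU, Matrix.zero_mul, Matrix.mul_zero]
    have e4 : Nᴴ * Qᴴ * (Q * N) = Nᴴ * N := by
      rw [Matrix.mul_assoc, ← Matrix.mul_assoc Qᴴ Q N, hQ, Matrix.one_mul]
    rw [e1, e2, e3, e4, add_zero, zero_add, key]
  · show U * _ + Q * _ = U
    have : ((0 : ℝ) : ℂ) • X = 0 := by simp
    rw [this, NormedSpace.exp_zero, ← fromBlocks_one, toBlocks_fromBlocks₁₁,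
      toBlocks_fromBlocks₂₁, Matrix.mul_one, Matrix.mul_zero, add_zero]
  · intro i j
    have hsum : U * A + Q * R = Δ := by
      rw [hQR, hAdef, Matrix.sub_mul, Matrix.one_mul, ← Matrix.mul_assoc]
      abel
    have h1 : HasDerivAt
        (fun t : ℝ => ∑ k, U i k * NormedSpace.exp ((t : ℂ) • X) (Sum.inl k) (Sum.inl j))
        (∑ k, U i k * X (Sum.inl k) (Sum.inl j)) 0 :=
      HasDerivAt.fun_sum fun k _ => (exp_entry_hasDerivAt X _ _).const_mul _
    have h2 : HasDerivAt
        (fun t : ℝ => ∑ k, Q i k * NormedSpace.exp ((t : ℂ) • X) (Sum.inr k) (Sum.inl j))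
        (∑ k, Q i k * X (Sum.inr k) (Sum.inl j)) 0 :=
      HasDerivAt.fun_sum fun k _ => (exp_entry_hasDerivAt X _ _).const_mul _
    have h3 := h1.fun_add h2
    have hval : (∑ k, U i k * X (Sum.inl k) (Sum.inl j)) +
        (∑ k, Q i k * X (Sum.inr k) (Sum.inl j)) = Δ i j := by
      have : ∀ k, X (Sum.inl k) (Sum.inl j) = A k j := fun k => rfl
      have h' : ∀ k, X (Sum.inr k) (Sum.inl j) = R k j := fun k => rfl
      simp_rw [this, h']
      rw [← Matrix.mul_apply, ← Matrix.mul_apply, ← Matrix.add_apply, hsum]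
    rw [hval] at h3
    have hfun : ∀ t : ℝ, geod U Q A R t i j =
        (∑ k, U i k * NormedSpace.exp ((t : ℂ) • X) (Sum.inl k) (Sum.inl j)) +
          ∑ k, Q i k * NormedSpace.exp ((t : ℂ) • X) (Sum.inr k) (Sum.inl j) := by
      intro t
      show (U * (NormedSpace.exp ((t : ℂ) • X)).toBlocks₁₁ +
          Q * (NormedSpace.exp ((t : ℂ) • X)).toBlocks₂₁) i j = _
      rw [Matrix.add_apply, Matrix.mul_apply, Matrix.mul_apply]
      rfl
    simpa only [hfun] using h3
end
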